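/- arXiv:1907.04669 — 4 statements merged into one kernel-verified Lean document; each statement's English description precedes it below -/
import Mathlib

section
/- Let c be bounded by c_max and strictly positive. Let 𝛃⁺ be a path of length K⁺ and 𝛃⁻ a path of length K⁻ with K⁻ > K⁺. Then for γ ≥ 1, L_γ(𝛃⁻) − L_γ(𝛃⁺) ≥ γ^{K⁺} ( γ·c(β⁻_{K⁻}) − c(β⁺_{K⁺}) − c_max · Σ_{k=1}^{K⁺−1} γ^{k−K⁺} ), where L_γ(𝛃) = Σ_{k=1}^{|𝛃|} γ^k c(β_k). In particular L_γ(𝛃⁻) − L_γ(𝛃⁺) → +∞ as γ → ∞. -/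
open Finset Filter

/-- Number of coordinates in which two vectors differ (the ℓ₀ "norm" of their difference). -/
noncomputable def diffCount {d : ℕ} (x y : Fin d → ℝ) : ℕ :=
  (Finset.univ.filter (fun i => x i ≠ y i)).card

/-- A coordinate path of length `K`: starts at `0`, each step changes at most one coordinate. -/
def IsPath {d : ℕ} (K : ℕ) (p : ℕ → Fin d → ℝ) : Prop :=
  p 0 = 0 ∧ ∀ k, 1 ≤ k → k ≤ K → diffCount (p (k - 1)) (p k) ≤ 1

/-- Number of nonzero coordinates of a vector (‖β‖₀). -/
noncomputable def sparsity {d : ℕ} (β : Fin d → ℝ) : ℕ :=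
  (Finset.univ.filter (fun i => β i ≠ 0)).card

/-- The cost sequence of a path of length `K`. -/
def costSeq {d : ℕ} (c : (Fin d → ℝ) → ℝ) (K : ℕ) (p : ℕ → Fin d → ℝ) : ℕ → ℝ :=
  fun k => if 1 ≤ k ∧ k ≤ K then c (p k) else 0

/-- Geometric-weighted interpretability loss of a path of length `K`. -/
noncomputable def pathLoss {d : ℕ} (c : (Fin d → ℝ) → ℝ) (γ : ℝ) (K : ℕ)
    (p : ℕ → Fin d → ℝ) : ℝ :=
  ∑ k ∈ Finset.Icc 1 K, γ ^ k * c (p k)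

/-- Model interpretability: infimum of the path loss over all explanations of `β`. -/
noncomputable def modelLoss {d : ℕ} (c : (Fin d → ℝ) → ℝ) (γ : ℝ) (β : Fin d → ℝ) : ℝ :=
  sInf {v : ℝ | ∃ K p, IsPath K p ∧ p K = β ∧ v = pathLoss c γ K p}

private lemma gap_lb {d : ℕ} (c : (Fin d → ℝ) → ℝ) (cmax : ℝ)
    (hc : ∀ x, 0 < c x ∧ c x ≤ cmax)
    (Kp Km : ℕ) (pp pm : ℕ → Fin d → ℝ) (hK : Kp < Km)
    (γ : ℝ) (hγ : 1 ≤ γ) :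
    γ ^ (Kp+1) * c (pm Km) - γ ^ Kp * c (pp Kp)
      - cmax * ∑ k ∈ Finset.Icc 1 (Kp-1), γ ^ k
    ≤ pathLoss c γ Km pm - pathLoss c γ Kp pp := by
  have hγ0 : (0:ℝ) < γ := lt_of_lt_of_le one_pos hγ
  have h1 : γ ^ (Kp+1) * c (pm Km) ≤ pathLoss c γ Km pm := by
    have hmem : Km ∈ Finset.Icc 1 Km := by simp; omega
    have hs := Finset.single_le_sum (f := fun k => γ ^ k * c (pm k))
      (fun i _ => mul_nonneg (by positivity) (hc _).1.le) hmem
    have : γ ^ (Kp+1) * c (pm Km) ≤ γ ^ Km * c (pm Km) :=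
      mul_le_mul_of_nonneg_right (pow_le_pow_right₀ hγ (by omega)) (hc _).1.le
    exact this.trans hs
  have h2 : pathLoss c γ Kp pp ≤
      γ ^ Kp * c (pp Kp) + cmax * ∑ k ∈ Finset.Icc 1 (Kp-1), γ ^ k := by
    cases Kp with
    | zero =>
        simp [pathLoss]
        have := (hc (pp 0)).1
        nlinarith
    | succ n =>
        have hzero : pathLoss c γ (n+1) pp
            = (∑ k ∈ Finset.Icc 1 n, γ ^ k * c (pp k)) + γ ^ (n+1) * c (pp (n+1)) := by
          rw [pathLoss, Finset.sum_Icc_succ_top (by omega)]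
        rw [hzero]
        simp only [Nat.add_sub_cancel]
        have hb : (∑ k ∈ Finset.Icc 1 n, γ ^ k * c (pp k))
            ≤ ∑ k ∈ Finset.Icc 1 n, cmax * γ ^ k := by
          apply Finset.sum_le_sum
          intro i _
          rw [mul_comm cmax]
          exact mul_le_mul_of_nonneg_left (hc _).2 (by positivity)
        rw [Finset.mul_sum]
        linarith
  linarith

/-- Lower bound on the loss gap between a longer and a shorter path, and divergence
of the gap as γ → ∞. -/
theorem stmt5 {d : ℕ} (c : (Fin d → ℝ) → ℝ) (cmax : ℝ)
    (hc : ∀ x, 0 < c x ∧ c x ≤ cmax)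
    (Kp Km : ℕ) (pp pm : ℕ → Fin d → ℝ) (hK : Kp < Km) :
    (∀ γ : ℝ, 1 ≤ γ →
      γ ^ Kp * (γ * c (pm Km) - c (pp Kp)
          - cmax * ∑ k ∈ Finset.Icc 1 (Kp - 1), γ ^ k / γ ^ Kp)
        ≤ pathLoss c γ Km pm - pathLoss c γ Kp pp) ∧
    Filter.Tendsto (fun γ : ℝ => pathLoss c γ Km pm - pathLoss c γ Kp pp)
      Filter.atTop Filter.atTop := by
  have cmax0 : 0 < cmax := (hc 0).1.trans_le (hc 0).2
  constructor
  · intro γ hγ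
    have hγ0 : (0:ℝ) < γ := lt_of_lt_of_le one_pos hγ
    have hne : γ ^ Kp ≠ 0 := by positivity
    have key := gap_lb c cmax hc Kp Km pp pm hK γ hγ
    have : γ ^ Kp * (γ * c (pm Km) - c (pp Kp)
          - cmax * ∑ k ∈ Finset.Icc 1 (Kp - 1), γ ^ k / γ ^ Kp)
        = γ ^ (Kp+1) * c (pm Km) - γ ^ Kp * c (pp Kp)
          - cmax * ∑ k ∈ Finset.Icc 1 (Kp-1), γ ^ k := by
      rw [← Finset.sum_div]
      field_simp
      ring
    linarith [key, this.ge, this.le]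
  · set a := c (pm Km) with ha
    have a0 : 0 < a := (hc _).1
    set C := c (pp Kp) + cmax * Kp with hC
    refine tendsto_atTop_mono' atTop
      (f₁ := fun γ : ℝ => γ * a - C) ?_ ?_
    · filter_upwards [eventually_ge_atTop (max 1 (C / a))] with γ hγ
      have hγ1 : (1:ℝ) ≤ γ := le_trans (le_max_left _ _) hγ
      have hγ0 : (0:ℝ) < γ := lt_of_lt_of_le one_pos hγ1
      have hCa : C ≤ γ * a := by
        have := (div_le_iff₀ a0).mp (le_trans (le_max_right _ _) hγ)
        linarith
      have key := gap_lb c cmax hc Kp Km pp pm hK γ hγ1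
      have hS : (∑ k ∈ Finset.Icc 1 (Kp-1), γ ^ k) ≤ (Kp:ℝ) * γ ^ Kp := by
        calc (∑ k ∈ Finset.Icc 1 (Kp-1), γ ^ k)
            ≤ ∑ k ∈ Finset.Icc 1 (Kp-1), γ ^ Kp := by
              apply Finset.sum_le_sum
              intro i hi
              simp only [Finset.mem_Icc] at hi
              exact pow_le_pow_right₀ hγ1 (by omega)
          _ = ((Kp-1 : ℕ):ℝ) * γ ^ Kp := by
              rw [Finset.sum_const, Nat.card_Icc]
              simp [nsmul_eq_mul]
          _ ≤ (Kp:ℝ) * γ ^ Kp := by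
              apply mul_le_mul_of_nonneg_right _ (by positivity)
              exact_mod_cast Nat.sub_le Kp 1
      have hpow1 : (1:ℝ) ≤ γ ^ Kp := one_le_pow₀ hγ1
      have step : γ ^ Kp * (γ * a - C)
          ≤ γ ^ (Kp+1) * a - γ ^ Kp * c (pp Kp)
            - cmax * ∑ k ∈ Finset.Icc 1 (Kp-1), γ ^ k := by
        have h3 : cmax * (∑ k ∈ Finset.Icc 1 (Kp-1), γ ^ k) ≤ cmax * ((Kp:ℝ) * γ ^ Kp) :=
          mul_le_mul_of_nonneg_left hS cmax0.le
        rw [hC]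
        ring_nf
        nlinarith [h3]
      have lb : γ * a - C ≤ γ ^ Kp * (γ * a - C) :=
        le_mul_of_one_le_left (by linarith) hpow1
      linarith
    · have : Filter.Tendsto (fun γ : ℝ => γ * a) atTop atTop :=
        Filter.Tendsto.atTop_mul_const a0 tendsto_id
      simpa [sub_eq_add_neg] using this.atTop_add tendsto_const_nhds
end

section
/- Let c be bounded and strictly positive, and let β⁺, β⁻ ∈ ℝ^d with ‖β⁺‖₀ < ‖β⁻‖₀. Define L_γ(β) as the infimum over all coordinate paths 𝛃 from 0 ending at β of Σ_{k=1}^{|𝛃|} γ^k c(β_k). Then L_γ(β⁻) − L_γ(β⁺) → +∞ as γ → ∞. -/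
open Finset Filter

lemma diffCount_self {d : ℕ} (x : Fin d → ℝ) : diffCount x x = 0 := by
  simp [diffCount]

lemma diffCount_triangle {d : ℕ} (x y z : Fin d → ℝ) :
    diffCount x z ≤ diffCount x y + diffCount y z := by
  classical
  have hsub : (univ.filter (fun i => x i ≠ z i)) ⊆
      (univ.filter (fun i => x i ≠ y i)) ∪ (univ.filter (fun i => y i ≠ z i)) := by
    intro i hi
    simp only [mem_filter, mem_union, mem_univ, true_and] at *
    by_contra hcon
    push_neg at hcon
    exact hi (hcon.1.trans hcon.2)
  calc diffCount x z ≤ _ := Finset.card_le_card hsub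
    _ ≤ _ := Finset.card_union_le _ _

lemma path_diff_le {d K : ℕ} {p : ℕ → Fin d → ℝ} (hp : IsPath K p) :
    ∀ k, k ≤ K → diffCount (p 0) (p k) ≤ k := by
  intro k
  induction k with
  | zero => intro _; simp [diffCount_self]
  | succ n ih =>
    intro hk
    have h1 := ih (Nat.le_of_succ_le hk)
    have h2 := hp.2 (n+1) (Nat.succ_le_succ (Nat.zero_le n)) hk
    simp only [Nat.add_sub_cancel] at h2
    calc diffCount (p 0) (p (n+1))
        ≤ diffCount (p 0) (p n) + diffCount (p n) (p (n+1)) := diffCount_triangle _ _ _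
      _ ≤ n + 1 := Nat.add_le_add h1 h2

lemma diffCount_zero_left {d : ℕ} (β : Fin d → ℝ) : diffCount 0 β = sparsity β := by
  unfold diffCount sparsity
  congr 1
  ext i
  simp [ne_comm]

lemma exists_path {d : ℕ} (β : Fin d → ℝ) :
    ∃ p : ℕ → Fin d → ℝ, IsPath (sparsity β) p ∧ p (sparsity β) = β := by
  classical
  set S := univ.filter (fun i : Fin d => β i ≠ 0) with hS
  set r : Fin d → ℕ := fun i => (S.filter (fun j => j ≤ i)).card with hr
  have hrpos : ∀ i, β i ≠ 0 → 1 ≤ r i := by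
    intro i hi
    apply Finset.card_pos.mpr ⟨i, ?_⟩
    simp [hr, hS, hi]
  have hrle : ∀ i, r i ≤ sparsity β := by
    intro i
    exact Finset.card_le_card (Finset.filter_subset _ _)
  have rmono : ∀ i j : Fin d, β j ≠ 0 → i < j → r i < r j := by
    intro i j hj hij
    apply Finset.card_lt_card
    rw [Finset.ssubset_iff_of_subset]
    · refine ⟨j, ?_, ?_⟩
      · simp [hS, hj]
      · simp [not_le.mpr hij]
    · intro x hx
      simp only [mem_filter] at hx ⊢
      exact ⟨hx.1, hx.2.trans hij.le⟩
  refine ⟨fun k i => if β i ≠ 0 ∧ r i ≤ k then β i else 0, ⟨?_, ?_⟩, ?_⟩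
  · funext i
    simp only [Pi.zero_apply]
    rw [if_neg]
    rintro ⟨hne, hle⟩
    exact absurd hle (by have := hrpos i hne; omega)
  · intro k hk1 hkK
    apply le_trans (le_of_eq rfl)
    unfold diffCount
    apply Finset.card_le_one.mpr
    intro a ha b hb
    simp only [mem_filter, mem_univ, true_and] at ha hb
    have key : ∀ x : Fin d, (if β x ≠ 0 ∧ r x ≤ k - 1 then β x else 0) ≠
        (if β x ≠ 0 ∧ r x ≤ k then β x else 0) → β x ≠ 0 ∧ r x = k := by
      intro x hx
      by_cases h0 : β x ≠ 0
      · refine ⟨h0, ?_⟩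
        by_cases h1 : r x ≤ k - 1
        · exact absurd (by rw [if_pos ⟨h0, h1⟩, if_pos ⟨h0, h1.trans (by omega)⟩]) hx
        · by_cases h2 : r x ≤ k
          · omega
          · exact absurd (by rw [if_neg (by tauto), if_neg (by tauto)]) hx
      · exact absurd (by rw [if_neg (by tauto), if_neg (by tauto)]) hx
    obtain ⟨ha0, hak⟩ := key a ha
    obtain ⟨hb0, hbk⟩ := key b hb
    rcases lt_trichotomy a b with hab | hab | hab
    · have := rmono a b hb0 hab; omega
    · exact hab
    · have := rmono b a ha0 hab; omega
  · funext i
    show (if β i ≠ 0 ∧ r i ≤ sparsity β then β i else 0) = β i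
    by_cases h0 : β i ≠ 0
    · rw [if_pos ⟨h0, hrle i⟩]
    · rw [if_neg (by tauto)]
      push_neg at h0
      exact h0.symm

/-- If ‖β⁺‖₀ < ‖β⁻‖₀ then the model-interpretability gap L_γ(β⁻) − L_γ(β⁺) → ∞
as γ → ∞, for bounded strictly positive costs. -/
theorem stmt6 {d : ℕ} (c : (Fin d → ℝ) → ℝ) (cmax : ℝ)
    (hc : ∀ x, 0 < c x ∧ c x ≤ cmax)
    (βp βm : Fin d → ℝ) (h : sparsity βp < sparsity βm) :
    Filter.Tendsto (fun γ : ℝ => modelLoss c γ βm - modelLoss c γ βp)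
      Filter.atTop Filter.atTop := by
  classical
  set s := sparsity βp with hs
  set m := sparsity βm with hm
  have hcβm : 0 < c βm := (hc βm).1
  have hcmax : 0 < cmax := lt_of_lt_of_le (hc 0).1 (hc 0).2
  have hm1 : 1 ≤ m := by omega
  -- bdd below
  have hBdd : ∀ γ : ℝ, 0 ≤ γ → ∀ β : Fin d → ℝ,
      BddBelow {v : ℝ | ∃ K p, IsPath K p ∧ p K = β ∧ v = pathLoss c γ K p} := by
    intro γ hγ β
    refine ⟨0, ?_⟩
    rintro v ⟨K, p, hp, hpK, rfl⟩
    apply Finset.sum_nonneg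
    intro k _
    exact mul_nonneg (pow_nonneg hγ k) (hc _).1.le
  have hupper : ∀ γ : ℝ, 1 ≤ γ → modelLoss c γ βp ≤ s * (cmax * γ ^ s) := by
    intro γ hγ
    have hγ0 : (0:ℝ) ≤ γ := zero_le_one.trans hγ
    obtain ⟨p, hp, hpend⟩ := exists_path βp
    have hmem : pathLoss c γ s p ∈
        {v : ℝ | ∃ K p, IsPath K p ∧ p K = βp ∧ v = pathLoss c γ K p} :=
      ⟨s, p, hp, hpend, rfl⟩
    refine le_trans (csInf_le (hBdd γ hγ0 βp) hmem) ?_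
    calc pathLoss c γ s p ≤ ∑ k ∈ Finset.Icc 1 s, cmax * γ ^ s := by
          apply Finset.sum_le_sum
          intro k hk
          have hks : k ≤ s := (Finset.mem_Icc.mp hk).2
          have h1 : γ ^ k ≤ γ ^ s := pow_le_pow_right₀ hγ hks
          have h2 : c (p k) ≤ cmax := (hc _).2
          calc γ ^ k * c (p k) ≤ γ ^ s * cmax :=
                mul_le_mul h1 h2 (hc _).1.le (pow_nonneg hγ0 s)
            _ = cmax * γ ^ s := mul_comm _ _
      _ = s * (cmax * γ ^ s) := by
          rw [Finset.sum_const, Nat.card_Icc, nsmul_eq_mul]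
          norm_num
  have hlower : ∀ γ : ℝ, 1 ≤ γ → γ ^ m * c βm ≤ modelLoss c γ βm := by
    intro γ hγ
    have hγ0 : (0:ℝ) ≤ γ := zero_le_one.trans hγ
    obtain ⟨q, hq, hqend⟩ := exists_path βm
    have hne : {v : ℝ | ∃ K p, IsPath K p ∧ p K = βm ∧ v = pathLoss c γ K p}.Nonempty :=
      ⟨pathLoss c γ m q, m, q, hq, hqend, rfl⟩
    apply le_csInf hne
    rintro v ⟨K, p, hp, hpK, rfl⟩
    have hKm : m ≤ K := by
      have := path_diff_le hp K le_rfl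
      rw [hp.1, hpK, diffCount_zero_left] at this
      exact this
    have hK1 : 1 ≤ K := le_trans hm1 hKm
    have hterm : γ ^ K * c (p K) ≤ pathLoss c γ K p := by
      apply Finset.single_le_sum (f := fun k => γ ^ k * c (p k))
        (fun k _ => mul_nonneg (pow_nonneg hγ0 k) (hc _).1.le)
        (Finset.mem_Icc.mpr ⟨hK1, le_rfl⟩)
    refine le_trans ?_ hterm
    rw [hpK]
    exact mul_le_mul_of_nonneg_right (pow_le_pow_right₀ hγ hKm) hcβm.le
  -- comparison function
  have hf : Tendsto (fun γ : ℝ => γ * c βm - s * cmax) atTop atTop := by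
    apply tendsto_atTop_add_const_right
    exact Tendsto.atTop_mul_const hcβm tendsto_id
  apply tendsto_atTop_mono' atTop ?_ hf
  filter_upwards [eventually_ge_atTop (1:ℝ),
    eventually_ge_atTop (s * cmax / c βm)] with γ hγ1 hγ2
  have hγ0 : (0:ℝ) ≤ γ := zero_le_one.trans hγ1
  have hsc : s * cmax ≤ γ * c βm := by
    rw [div_le_iff₀ hcβm] at hγ2
    linarith
  have hpow1 : (1:ℝ) ≤ γ ^ s := one_le_pow₀ hγ1
  have hpow2 : γ ^ (s + 1) ≤ γ ^ m := pow_le_pow_right₀ hγ1 (by omega)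
  have hpow3 : γ ^ (s + 1) = γ ^ s * γ := pow_succ γ s
  have key : γ * c βm - s * cmax ≤ γ ^ m * c βm - s * (cmax * γ ^ s) := by
    have h1 : γ ^ s * (γ * c βm - s * cmax) ≤ γ ^ m * c βm - s * (cmax * γ ^ s) := by
      have : γ ^ s * γ * c βm ≤ γ ^ m * c βm :=
        mul_le_mul_of_nonneg_right (hpow3 ▸ hpow2) hcβm.le
      nlinarith
    have h2 : γ * c βm - s * cmax ≤ γ ^ s * (γ * c βm - s * cmax) :=
      le_mul_of_one_le_left (by linarith) hpow1
    linarith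
  have := hlower γ hγ1
  have := hupper γ hγ1
  simp only [sub_le_iff_le_add] at *
  linarith
end

section
/- Let c be bounded and strictly positive, and let β⁺, β⁻ ∈ ℝ^d with ‖β⁺‖₀ = ‖β⁻‖₀ and c(β⁺) < c(β⁻). Define L_γ(β) as the infimum over all coordinate paths from 0 ending at β of Σ_{k=1}^{|𝛃|} γ^k c(β_k). Then L_γ(β⁻) − L_γ(β⁺) → +∞ as γ → ∞. -/
open Finset Filter

lemma sparsity_le_add {d : ℕ} (x y : Fin d → ℝ) :
    sparsity y ≤ sparsity x + diffCount x y := by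
  unfold sparsity diffCount
  refine le_trans (Finset.card_le_card ?_) (Finset.card_union_le _ _)
  intro i hi
  simp only [Finset.mem_filter, Finset.mem_union, Finset.mem_univ, true_and] at *
  by_cases h : x i = 0
  · right; rw [h]; exact fun he => hi he.symm
  · left; exact h

lemma sparsity_le_of_path {d : ℕ} {K : ℕ} {p : ℕ → Fin d → ℝ} (hp : IsPath K p) :
    ∀ k, k ≤ K → sparsity (p k) ≤ k := by
  intro k
  induction k with
  | zero => intro _; simp [hp.1, sparsity]
  | succ n ih =>
    intro h
    have h1 := hp.2 (n+1) (by omega) h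
    simp only [Nat.add_sub_cancel] at h1
    have h2 := sparsity_le_add (p n) (p (n+1))
    have hn := ih (by omega)
    omega

lemma pathLoss_nonneg {d : ℕ} (c : (Fin d → ℝ) → ℝ) (hc : ∀ x, 0 < c x)
    {γ : ℝ} (hγ : 0 ≤ γ) (K : ℕ) (p : ℕ → Fin d → ℝ) : 0 ≤ pathLoss c γ K p :=
  Finset.sum_nonneg fun k _ => mul_nonneg (pow_nonneg hγ k) (hc _).le

lemma sparsity_eq_zero {d : ℕ} {β : Fin d → ℝ} (h : sparsity β = 0) : β = 0 := by
  funext i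
  simp only [Pi.zero_apply]
  by_contra hi
  have hmem : i ∈ Finset.univ.filter (fun i => β i ≠ 0) := by simp [hi]
  have := Finset.card_pos.mpr ⟨i, hmem⟩
  unfold sparsity at h
  omega


/-- If ‖β⁺‖₀ = ‖β⁻‖₀ and c(β⁺) < c(β⁻), then L_γ(β⁻) − L_γ(β⁺) → ∞ as γ → ∞. -/
theorem stmt7 {d : ℕ} (c : (Fin d → ℝ) → ℝ) (cmax : ℝ)
    (hc : ∀ x, 0 < c x ∧ c x ≤ cmax)
    (βp βm : Fin d → ℝ) (hs : sparsity βp = sparsity βm) (hcost : c βp < c βm) :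
    Filter.Tendsto (fun γ : ℝ => modelLoss c γ βm - modelLoss c γ βp)
      Filter.atTop Filter.atTop := by
  have hcpos : ∀ x, 0 < c x := fun x => (hc x).1
  set s := sparsity βp with hsdef
  have hs1 : 1 ≤ s := by
    by_contra h
    have hs0 : s = 0 := by omega
    have hp0 : βp = 0 := sparsity_eq_zero hs0
    have hm0 : βm = 0 := sparsity_eq_zero (by omega)
    rw [hp0, hm0] at hcost
    exact lt_irrefl _ hcost
  set A := c βm - c βp with hAdef
  have hA : 0 < A := sub_pos.mpr hcost
  have hcmax : 0 < cmax := lt_of_lt_of_le (hcpos βp) (hc βp).2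
  set B := ((s : ℝ) - 1) * cmax with hBdef
  have hB : 0 ≤ B := mul_nonneg (sub_nonneg.mpr (by exact_mod_cast hs1 : (1:ℝ) ≤ (s:ℝ))) hcmax.le
  have htend : Tendsto (fun γ : ℝ => γ * A - B) atTop atTop := by
    have h1 : Tendsto (fun γ : ℝ => γ * A) atTop atTop :=
      Tendsto.atTop_mul_const hA tendsto_id
    simpa [sub_eq_add_neg] using tendsto_atTop_add_const_right atTop (-B) h1
  apply tendsto_atTop_mono' atTop _ htend
  filter_upwards [eventually_ge_atTop (1 : ℝ), eventually_ge_atTop (B / A)] with γ hγ1 hγ2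
  have hγ0 : (0 : ℝ) ≤ γ := by linarith
  have hγA : B ≤ γ * A := (div_le_iff₀ hA).mp hγ2
  -- lower bound for modelLoss at βm
  have hne_m : {v : ℝ | ∃ K p, IsPath K p ∧ p K = βm ∧ v = pathLoss c γ K p}.Nonempty := by
    obtain ⟨p, hp, hend⟩ := exists_path βm
    exact ⟨_, sparsity βm, p, hp, hend, rfl⟩
  have hlb : γ ^ s * c βm ≤ modelLoss c γ βm := by
    apply le_csInf hne_m
    rintro v ⟨K, p, hp, hend, rfl⟩
    have hKs : s ≤ K := by
      have h := sparsity_le_of_path hp K le_rfl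
      rw [hend] at h
      omega
    have hK1 : 1 ≤ K := le_trans hs1 hKs
    have hterm : γ ^ K * c (p K) ≤ pathLoss c γ K p := by
      apply Finset.single_le_sum (f := fun k => γ ^ k * c (p k))
        (fun k _ => mul_nonneg (pow_nonneg hγ0 k) (hcpos _).le)
      simp [hK1]
    calc γ ^ s * c βm ≤ γ ^ K * c βm :=
          mul_le_mul_of_nonneg_right (pow_le_pow_right₀ hγ1 hKs) (hcpos βm).le
      _ = γ ^ K * c (p K) := by rw [hend]
      _ ≤ _ := hterm
  -- upper bound for modelLoss at βp
  have hbdd : BddBelow {v : ℝ | ∃ K p, IsPath K p ∧ p K = βp ∧ v = pathLoss c γ K p} := by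
    refine ⟨0, ?_⟩
    rintro v ⟨K, q, hq, he, rfl⟩
    exact pathLoss_nonneg c hcpos hγ0 K q
  have hub : modelLoss c γ βp ≤ γ ^ s * c βp + B * γ ^ (s - 1) := by
    obtain ⟨p, hp, hend⟩ := exists_path βp
    refine le_trans (csInf_le hbdd ⟨s, p, hp, hend, rfl⟩) ?_
    have hsplit : pathLoss c γ s p
        = (∑ k ∈ Finset.Icc 1 (s - 1), γ ^ k * c (p k)) + γ ^ s * c (p s) := by
      unfold pathLoss
      have hss : s = (s - 1) + 1 := by omega
      rw [hss, Finset.sum_Icc_succ_top (by omega), ← hss]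
    rw [hsplit, hend]
    have hsum : (∑ k ∈ Finset.Icc 1 (s - 1), γ ^ k * c (p k)) ≤ B * γ ^ (s - 1) := by
      calc (∑ k ∈ Finset.Icc 1 (s - 1), γ ^ k * c (p k))
          ≤ ∑ _k ∈ Finset.Icc 1 (s - 1), γ ^ (s - 1) * cmax := by
            apply Finset.sum_le_sum
            intro k hk
            simp only [Finset.mem_Icc] at hk
            exact mul_le_mul (pow_le_pow_right₀ hγ1 hk.2) (hc _).2 (hcpos _).le
              (pow_nonneg hγ0 _)
        _ = ((s - 1 : ℕ) : ℝ) * (γ ^ (s - 1) * cmax) := by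
            rw [Finset.sum_const, Nat.card_Icc]
            simp [nsmul_eq_mul]
        _ = B * γ ^ (s - 1) := by
            rw [Nat.cast_sub hs1, hBdef]
            push_cast
            ring
    linarith
  -- combine
  have hpow : (1 : ℝ) ≤ γ ^ (s - 1) := one_le_pow₀ hγ1
  have hss : γ ^ s = γ ^ (s - 1) * γ := by
    conv_lhs => rw [show s = (s - 1) + 1 from by omega]
    rw [pow_succ]
  have key : γ * A - B ≤ γ ^ s * c βm - (γ ^ s * c βp + B * γ ^ (s - 1)) := by
    have h1 : γ ^ s * c βm - (γ ^ s * c βp + B * γ ^ (s - 1))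
        = γ ^ (s - 1) * (γ * A - B) := by
      rw [hss, hAdef]; ring
    rw [h1]
    nlinarith [mul_nonneg (sub_nonneg.mpr hpow) (sub_nonneg.mpr (by linarith : B ≤ γ * A))]
  linarith
end

section
/- Fix γ ≥ 1 and a cost c with 0 < c(x) ≤ c_max for all x. For any path 𝛃 of length K ending at β with K > ‖β‖₀ and any path 𝛃' of length ‖β‖₀ ending at β, if additionally γ·c(β) > c(β) + c_max·Σ_{k=1}^{‖β‖₀−1} γ^{k−‖β‖₀} then L_γ over paths can strictly prefer shorter paths; formally: γ^{‖β‖₀}(γ c(β) − c(β'_{‖β‖₀}) − c_max Σ_{k=1}^{‖β‖₀−1} γ^{k−‖β‖₀}) ≤ L_γ(𝛃) − L_γ(𝛃'). -/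
open Finset Filter

/-- Quantitative comparison showing that for γ ≥ 1 the loss of a path longer than
‖β‖₀ exceeds that of a minimum-length path by the stated bound. -/
theorem stmt17 {d : ℕ} (c : (Fin d → ℝ) → ℝ) (cmax : ℝ)
    (hc : ∀ x, 0 < c x ∧ c x ≤ cmax) (γ : ℝ) (hγ : 1 ≤ γ)
    (β : Fin d → ℝ) (K : ℕ) (p p' : ℕ → Fin d → ℝ)
    (hp : IsPath K p) (hpend : p K = β) (hK : sparsity β < K)
    (hp' : IsPath (sparsity β) p') (hp'end : p' (sparsity β) = β)
    (hextra : c β + cmax * ∑ k ∈ Finset.Icc 1 (sparsity β - 1), γ ^ k / γ ^ sparsity β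
        < γ * c β) :
    γ ^ sparsity β * (γ * c β - c (p' (sparsity β))
        - cmax * ∑ k ∈ Finset.Icc 1 (sparsity β - 1), γ ^ k / γ ^ sparsity β)
      ≤ pathLoss c γ K p - pathLoss c γ (sparsity β) p' := by
  set s := sparsity β with hs
  have hγ0 : (0:ℝ) < γ := lt_of_lt_of_le one_pos hγ
  have hcβ := (hc β).1
  have hlow : γ ^ (s+1) * c β ≤ pathLoss c γ K p := by
    have hK1 : K ∈ Finset.Icc 1 K := by
      simp only [Finset.mem_Icc]; omega
    have h1 : γ ^ K * c (p K) ≤ pathLoss c γ K p := by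
      apply Finset.single_le_sum (f := fun k => γ ^ k * c (p k)) _ hK1
      intro i _
      exact mul_nonneg (pow_nonneg hγ0.le _) (hc _).1.le
    calc γ ^ (s+1) * c β ≤ γ ^ K * c β := by
          apply mul_le_mul_of_nonneg_right _ hcβ.le
          exact pow_le_pow_right₀ hγ (by omega)
      _ ≤ pathLoss c γ K p := by rw [← hpend]; exact h1
  have hup : pathLoss c γ s p' ≤ γ ^ s * c (p' s) + cmax * ∑ k ∈ Finset.Icc 1 (s-1), γ ^ k := by
    rcases Nat.eq_zero_or_pos s with h0 | h1
    · simp only [h0, pathLoss, Finset.Icc_self, Nat.zero_sub, Finset.Icc_eq_empty_of_lt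
        (by norm_num : (1:ℕ) > 0), Finset.sum_empty, mul_zero, add_zero, pow_zero, one_mul]
      exact (hc _).1.le
    · obtain ⟨t, ht⟩ : ∃ t, s = t + 1 := ⟨s - 1, by omega⟩
      rw [ht]
      have hsplit : pathLoss c γ (t+1) p'
          = (∑ k ∈ Finset.Icc 1 t, γ ^ k * c (p' k)) + γ ^ (t+1) * c (p' (t+1)) := by
        exact Finset.sum_Icc_succ_top (by omega) _
      rw [hsplit, Nat.add_sub_cancel, Finset.mul_sum]
      have hb : ∑ k ∈ Finset.Icc 1 t, γ ^ k * c (p' k)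
          ≤ ∑ k ∈ Finset.Icc 1 t, cmax * γ ^ k := by
        apply Finset.sum_le_sum
        intro i _
        rw [mul_comm cmax]
        exact mul_le_mul_of_nonneg_left (hc _).2 (pow_nonneg hγ0.le _)
      linarith
  have hγs : (γ : ℝ) ^ s ≠ 0 := pow_ne_zero _ (ne_of_gt hγ0)
  have hkey : γ ^ s * (γ * c β - c (p' s)
      - cmax * ∑ k ∈ Finset.Icc 1 (s-1), γ ^ k / γ ^ s)
      = γ ^ (s+1) * c β - γ ^ s * c (p' s) - cmax * ∑ k ∈ Finset.Icc 1 (s-1), γ ^ k := by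
    rw [← Finset.sum_div]
    field_simp
    ring
  rw [hkey]
  linarith
end
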